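/- Let W(λ) be a differentiable 2n×2n symplectic family and Ŵ a fixed symplectic matrix. Define the 4n×4n matrices Ẑ(λ) = R⁻¹{I, W(λ)Ŵ⁻¹}R and 𝒵(λ) = R⁻¹{I, W(λ)}, where {I, M} is the 4n×4n symplectic embedding of M with blocks arranged as (I 0 0 0; 0 A 0 B; 0 0 I 0; 0 C 0 D) for M = (A B; C D), and R = (1/√2)(0 −I I 0; 0 I I 0; −I 0 0 −I; −I 0 0 I). Then R is symplectic and orthogonal, {I,W(λ)}, 𝒵(λ), Ẑ(λ) are symplectic, and if Ψ(W(λ)) ≥ 0 then Ψ(𝒵(λ)) ≥ 0 and Ψ(Ẑ(λ)) ≥ 0. -/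

import Mathlib

open Matrix
noncomputable section

/-- The standard symplectic matrix `J = [[0, I], [-I, 0]]`. -/
def Jmat (k : Type*) [Fintype k] [DecidableEq k] : Matrix (k ⊕ k) (k ⊕ k) ℝ :=
  fromBlocks 0 1 (-1) 0

/-- A matrix `S` is symplectic if `Sᵀ J S = J`. -/
def IsSymplectic {k : Type*} [Fintype k] [DecidableEq k]
    (S : Matrix (k ⊕ k) (k ⊕ k) ℝ) : Prop :=
  Sᵀ * Jmat k * S = Jmat k

/-- `S'` is the (entrywise) derivative family of the matrix family `S`. -/
def HasMatDeriv {k m : Type*} (S S' : ℝ → Matrix k m ℝ) : Prop :=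
  ∀ (l : ℝ) (i : k) (j : m), HasDerivAt (fun t => S t i j) (S' l i j) l

/-- `Ψ(S(λ)) = Jᵀ S'(λ) S(λ)⁻¹`, where `S'` is a derivative family of `S`. -/
def Psi {k : Type*} [Fintype k] [DecidableEq k]
    (S S' : ℝ → Matrix (k ⊕ k) (k ⊕ k) ℝ) (l : ℝ) : Matrix (k ⊕ k) (k ⊕ k) ℝ :=
  (Jmat k)ᵀ * S' l * (S l)⁻¹

/-- The `4n×4n` symplectic embedding `{I, M}` of `M = (A B; C D)`, with rows/columns
ordered as `(I 0 0 0; 0 A 0 B; 0 0 I 0; 0 C 0 D)`. -/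
def embed {k : Type*} [Fintype k] [DecidableEq k]
    (M : Matrix (k ⊕ k) (k ⊕ k) ℝ) : Matrix ((k ⊕ k) ⊕ (k ⊕ k)) ((k ⊕ k) ⊕ (k ⊕ k)) ℝ :=
  fromBlocks (fromBlocks 1 0 0 M.toBlocks₁₁) (fromBlocks 0 0 0 M.toBlocks₁₂)
             (fromBlocks 0 0 0 M.toBlocks₂₁) (fromBlocks 1 0 0 M.toBlocks₂₂)

/-- The derivative of `{I, M(λ)}` when `M'` is the derivative of `M`, i.e. the embedding
`(0 0 0 0; 0 A' 0 B'; 0 0 0 0; 0 C' 0 D')`. -/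
def embedDer {k : Type*} [Fintype k] [DecidableEq k]
    (M' : Matrix (k ⊕ k) (k ⊕ k) ℝ) : Matrix ((k ⊕ k) ⊕ (k ⊕ k)) ((k ⊕ k) ⊕ (k ⊕ k)) ℝ :=
  fromBlocks (fromBlocks 0 0 0 M'.toBlocks₁₁) (fromBlocks 0 0 0 M'.toBlocks₁₂)
             (fromBlocks 0 0 0 M'.toBlocks₂₁) (fromBlocks 0 0 0 M'.toBlocks₂₂)

/-- The matrix `R = (1/√2)(0 −I I 0; 0 I I 0; −I 0 0 −I; −I 0 0 I)`. -/
def Rmat (k : Type*) [Fintype k] [DecidableEq k] :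
    Matrix ((k ⊕ k) ⊕ (k ⊕ k)) ((k ⊕ k) ⊕ (k ⊕ k)) ℝ :=
  (Real.sqrt 2)⁻¹ •
    fromBlocks (fromBlocks 0 (-1) 0 1) (fromBlocks 1 0 1 0)
               (fromBlocks (-1) 0 (-1) 0) (fromBlocks 0 (-1) 0 1)

/-! ### Auxiliary lemmas -/

section Aux

set_option linter.unusedSectionVars false

variable {k : Type*} [Fintype k] [DecidableEq k]

lemma Jmat_mul_Jmat : Jmat k * Jmat k = -1 := by
  have h : (-1 : Matrix (k ⊕ k) (k ⊕ k) ℝ) = fromBlocks (-1) 0 0 (-1) := by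
    rw [← fromBlocks_one, Matrix.fromBlocks_neg]; simp
  rw [Jmat, fromBlocks_multiply, h]
  simp

lemma Jmat_transpose : (Jmat k)ᵀ = -Jmat k := by
  rw [Jmat, fromBlocks_transpose, Matrix.fromBlocks_neg]
  simp

lemma IsSymplectic.left_inv {S : Matrix (k ⊕ k) (k ⊕ k) ℝ} (h : IsSymplectic S) :
    (-(Jmat k) * Sᵀ * Jmat k) * S = 1 := by
  calc (-(Jmat k) * Sᵀ * Jmat k) * S = -(Jmat k) * (Sᵀ * Jmat k * S) := by noncomm_ring
    _ = -(Jmat k) * Jmat k := by rw [h]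
    _ = 1 := by rw [neg_mul, Jmat_mul_Jmat, neg_neg]

lemma IsSymplectic.isUnit_det {S : Matrix (k ⊕ k) (k ⊕ k) ℝ} (h : IsSymplectic S) :
    IsUnit S.det :=
  Matrix.isUnit_det_of_left_inverse h.left_inv

lemma IsSymplectic.mul {S T : Matrix (k ⊕ k) (k ⊕ k) ℝ} (hS : IsSymplectic S)
    (hT : IsSymplectic T) : IsSymplectic (S * T) := by
  unfold IsSymplectic at *
  calc (S * T)ᵀ * Jmat k * (S * T) = Tᵀ * (Sᵀ * Jmat k * S) * T := by
        rw [transpose_mul]; noncomm_ring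
    _ = Jmat k := by rw [hS, hT]

lemma IsSymplectic.inv {S : Matrix (k ⊕ k) (k ⊕ k) ℝ} (h : IsSymplectic S) :
    IsSymplectic S⁻¹ := by
  have hmul : S * S⁻¹ = 1 := mul_nonsing_inv _ h.isUnit_det
  unfold IsSymplectic at *
  nth_rewrite 1 [← h]
  calc S⁻¹ᵀ * (Sᵀ * Jmat k * S) * S⁻¹ = (S * S⁻¹)ᵀ * Jmat k * (S * S⁻¹) := by
        rw [transpose_mul]; noncomm_ring
    _ = Jmat k := by rw [hmul]; simp

/-- The unscaled version of `Rmat`. -/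
def Bmat (k : Type*) [Fintype k] [DecidableEq k] :
    Matrix ((k ⊕ k) ⊕ (k ⊕ k)) ((k ⊕ k) ⊕ (k ⊕ k)) ℝ :=
  fromBlocks (fromBlocks 0 (-1) 0 1) (fromBlocks 1 0 1 0)
             (fromBlocks (-1) 0 (-1) 0) (fromBlocks 0 (-1) 0 1)

lemma Rmat_eq : Rmat k = (Real.sqrt 2)⁻¹ • Bmat k := rfl

lemma sqrt_two_inv_sq : (Real.sqrt 2)⁻¹ * (Real.sqrt 2)⁻¹ = (2:ℝ)⁻¹ := by
  rw [← mul_inv, Real.mul_self_sqrt (by norm_num : (0:ℝ) ≤ 2)]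

lemma hBB : (Bmat k)ᵀ * Bmat k = (2:ℝ) • 1 := by
  have e1 : ((2:ℝ) • 1 : Matrix ((k⊕k)⊕(k⊕k)) ((k⊕k)⊕(k⊕k)) ℝ)
      = fromBlocks (fromBlocks (1+1) 0 0 (1+1)) 0 0 (fromBlocks (1+1) 0 0 (1+1)) := by
    rw [two_smul, ← fromBlocks_one (l := k ⊕ k), ← fromBlocks_one (l := k)]
    simp only [Matrix.fromBlocks_add]
    simp
  rw [e1, Bmat]
  simp only [fromBlocks_transpose, transpose_zero, transpose_one, transpose_neg,
    fromBlocks_multiply, Matrix.fromBlocks_add]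
  rw [fromBlocks_inj]
  refine ⟨?_, ?_, ?_, ?_⟩ <;>
    · try rw [show (0 : Matrix (k ⊕ k) (k ⊕ k) ℝ) = fromBlocks 0 0 0 0 from
        Matrix.fromBlocks_zero.symm]
      try simp only [fromBlocks_multiply, Matrix.fromBlocks_add]
      rw [fromBlocks_inj]
      refine ⟨by noncomm_ring, by noncomm_ring, by noncomm_ring, by noncomm_ring⟩

lemma hBJB : (Bmat k)ᵀ * Jmat (k ⊕ k) * Bmat k = (2:ℝ) • Jmat (k ⊕ k) := by
  have e2 : Jmat (k ⊕ k)
      = fromBlocks 0 (fromBlocks 1 0 0 1) (fromBlocks (-1) 0 0 (-1)) 0 := by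
    have h : (-1 : Matrix (k ⊕ k) (k ⊕ k) ℝ) = fromBlocks (-1) 0 0 (-1) := by
      rw [← fromBlocks_one, Matrix.fromBlocks_neg]; simp
    rw [Jmat, fromBlocks_one, ← h]
  have e3 : ((2:ℝ) • Jmat (k ⊕ k) : Matrix ((k⊕k)⊕(k⊕k)) ((k⊕k)⊕(k⊕k)) ℝ)
      = fromBlocks 0 (fromBlocks (1+1) 0 0 (1+1)) (fromBlocks (-1+-1) 0 0 (-1+-1)) 0 := by
    rw [two_smul, e2]
    simp only [Matrix.fromBlocks_add]
    simp
  rw [e3, e2, Bmat]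
  simp only [fromBlocks_transpose, transpose_zero, transpose_one, transpose_neg,
    fromBlocks_multiply, Matrix.fromBlocks_add]
  rw [fromBlocks_inj]
  refine ⟨?_, ?_, ?_, ?_⟩ <;>
    · try rw [show (0 : Matrix (k ⊕ k) (k ⊕ k) ℝ) = fromBlocks 0 0 0 0 from
        Matrix.fromBlocks_zero.symm]
      try simp only [fromBlocks_multiply, Matrix.fromBlocks_add]
      rw [fromBlocks_inj]
      refine ⟨by noncomm_ring, by noncomm_ring, by noncomm_ring, by noncomm_ring⟩

lemma R_orth : (Rmat k)ᵀ * Rmat k = 1 := by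
  rw [Rmat_eq, transpose_smul, Matrix.smul_mul, Matrix.mul_smul, smul_smul,
    sqrt_two_inv_sq, hBB, smul_smul]
  norm_num

lemma R_symp : IsSymplectic (Rmat k) := by
  unfold IsSymplectic
  rw [Rmat_eq, transpose_smul, Matrix.smul_mul, Matrix.smul_mul, Matrix.mul_smul, smul_smul,
    sqrt_two_inv_sq, hBJB, smul_smul]
  norm_num

/-- The interleaving involution of `(k ⊕ k) ⊕ (k ⊕ k)`. -/
def swFun (k : Type*) : ((k ⊕ k) ⊕ (k ⊕ k)) → ((k ⊕ k) ⊕ (k ⊕ k)) :=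
  fun x => match x with
    | .inl (.inl a) => .inl (.inl a)
    | .inl (.inr a) => .inr (.inl a)
    | .inr (.inl a) => .inl (.inr a)
    | .inr (.inr a) => .inr (.inr a)

/-- The interleaving involution of `(k ⊕ k) ⊕ (k ⊕ k)` as an equivalence. -/
def swEquiv (k : Type*) : ((k ⊕ k) ⊕ (k ⊕ k)) ≃ ((k ⊕ k) ⊕ (k ⊕ k)) where
  toFun := swFun k
  invFun := swFun k
  left_inv := by rintro ((a | a) | (a | a)) <;> rfl
  right_inv := by rintro ((a | a) | (a | a)) <;> rfl

lemma embed_eq (M : Matrix (k ⊕ k) (k ⊕ k) ℝ) :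
    embed M = (fromBlocks 1 0 0 M).submatrix (swEquiv k) (swEquiv k) := by
  ext i j
  rcases i with (i | i) | (i | i) <;> rcases j with (j | j) | (j | j) <;>
    simp [embed, swEquiv, swFun, fromBlocks, toBlocks₁₁, toBlocks₁₂,
      toBlocks₂₁, toBlocks₂₂, Matrix.one_apply]

lemma embedDer_eq (M : Matrix (k ⊕ k) (k ⊕ k) ℝ) :
    embedDer M = (fromBlocks 0 0 0 M).submatrix (swEquiv k) (swEquiv k) := by
  ext i j
  rcases i with (i | i) | (i | i) <;> rcases j with (j | j) | (j | j) <;>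
    simp [embedDer, swEquiv, swFun, fromBlocks, toBlocks₁₁, toBlocks₁₂,
      toBlocks₂₁, toBlocks₂₂]

lemma Jbig_eq :
    Jmat (k ⊕ k) = (fromBlocks (Jmat k) 0 0 (Jmat k)).submatrix (swEquiv k) (swEquiv k) := by
  ext i j
  rcases i with (i | i) | (i | i) <;> rcases j with (j | j) | (j | j) <;>
    simp [Jmat, swEquiv, swFun, fromBlocks, Matrix.one_apply]

lemma embed_symp {M : Matrix (k ⊕ k) (k ⊕ k) ℝ} (h : IsSymplectic M) :
    IsSymplectic (embed M) := by
  unfold IsSymplectic at *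
  rw [embed_eq, Jbig_eq, transpose_submatrix, submatrix_mul_equiv, submatrix_mul_equiv]
  congr 1
  rw [fromBlocks_transpose, fromBlocks_multiply, fromBlocks_multiply]
  simp [h]

lemma embed_inv {M : Matrix (k ⊕ k) (k ⊕ k) ℝ} (h : IsUnit M.det) :
    (embed M)⁻¹ = embed M⁻¹ := by
  apply inv_eq_left_inv
  rw [embed_eq, embed_eq, submatrix_mul_equiv]
  have h1 : fromBlocks (1 : Matrix (k⊕k) (k⊕k) ℝ) 0 0 M⁻¹ * fromBlocks 1 0 0 M = 1 := by
    rw [fromBlocks_multiply]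
    simp [nonsing_inv_mul _ h]
  rw [h1, submatrix_one_equiv]

/-- The key algebraic identity:  `Jᵀ ⬝ embedDer M' ⬝ (embed M)⁻¹` is the `sw`-conjugated
block embedding of `Jᵀ M' M⁻¹`. -/
lemma psi_core (M M' : Matrix (k ⊕ k) (k ⊕ k) ℝ) (hM : IsUnit M.det) :
    (Jmat (k ⊕ k))ᵀ * embedDer M' * (embed M)⁻¹
      = (fromBlocks 0 0 0 ((Jmat k)ᵀ * M' * M⁻¹)).submatrix (swEquiv k) (swEquiv k) := by
  rw [embed_inv hM, Jbig_eq, embedDer_eq, embed_eq, transpose_submatrix,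
    submatrix_mul_equiv, submatrix_mul_equiv]
  congr 1
  rw [fromBlocks_transpose, fromBlocks_multiply, fromBlocks_multiply]
  simp [Matrix.mul_assoc]

lemma posSemidef_corner {P : Matrix (k ⊕ k) (k ⊕ k) ℝ} (hP : P.PosSemidef) :
    (fromBlocks (0 : Matrix (k ⊕ k) (k ⊕ k) ℝ) 0 0 P).PosSemidef := by
  have h := hP.conjTranspose_mul_mul_same
    (fromCols 0 1 : Matrix (k⊕k) ((k⊕k) ⊕ (k⊕k)) ℝ)
  have hB : (fromCols 0 1 : Matrix (k⊕k) ((k⊕k) ⊕ (k⊕k)) ℝ)ᴴ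
      = fromRows (0 : Matrix (k⊕k) (k⊕k) ℝ) 1 := by
    rw [conjTranspose_eq_transpose_of_trivial, transpose_fromCols]
    simp
  rw [hB, fromRows_mul, fromRows_mul_fromCols] at h
  simpa using h

lemma posSemidef_congr {X P : Matrix ((k⊕k)⊕(k⊕k)) ((k⊕k)⊕(k⊕k)) ℝ} (hP : P.PosSemidef) :
    (Xᵀ * P * X).PosSemidef := by
  have h := hP.conjTranspose_mul_mul_same X
  rwa [conjTranspose_eq_transpose_of_trivial] at h

end Aux

theorem statement18_aux {k : Type*} [Fintype k] [DecidableEq k]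
    (W W' : ℝ → Matrix (k ⊕ k) (k ⊕ k) ℝ)
    (Wh : Matrix (k ⊕ k) (k ⊕ k) ℝ)
    (hW : ∀ l, IsSymplectic (W l)) (hWh : IsSymplectic Wh) :
    IsSymplectic (Rmat k) ∧ (Rmat k)ᵀ * Rmat k = 1 ∧
    (∀ l, IsSymplectic (embed (W l)) ∧
      IsSymplectic ((Rmat k)⁻¹ * embed (W l)) ∧
      IsSymplectic ((Rmat k)⁻¹ * embed (W l * Wh⁻¹) * Rmat k)) ∧
    ((∀ l, (Psi W W' l).PosSemidef) →
      ∀ l,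
        (Psi (fun t => (Rmat k)⁻¹ * embed (W t))
            (fun t => (Rmat k)⁻¹ * embedDer (W' t)) l).PosSemidef ∧
        (Psi (fun t => (Rmat k)⁻¹ * embed (W t * Wh⁻¹) * Rmat k)
            (fun t => (Rmat k)⁻¹ * embedDer (W' t * Wh⁻¹) * Rmat k) l).PosSemidef) := by
  have hRsymp : IsSymplectic (Rmat k) := R_symp
  have hRorth : (Rmat k)ᵀ * Rmat k = 1 := R_orth
  have hRinv : (Rmat k)⁻¹ = (Rmat k)ᵀ := inv_eq_left_inv hRorth
  have hRdet : IsUnit (Rmat k).det := hRsymp.isUnit_det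
  have hRTsymp : IsSymplectic (Rmat k)ᵀ := hRinv ▸ hRsymp.inv
  -- `Jᵀ R⁻¹ = Rᵀ Jᵀ`
  have hJR : (Jmat (k ⊕ k))ᵀ * (Rmat k)⁻¹ = (Rmat k)ᵀ * (Jmat (k ⊕ k))ᵀ := by
    have h1 : Jmat (k ⊕ k) * (Rmat k)⁻¹ = (Rmat k)ᵀ * Jmat (k ⊕ k) := by
      have := congrArg (fun X => X * (Rmat k)⁻¹) hRsymp
      simpa [Matrix.mul_assoc, mul_nonsing_inv _ hRdet] using this.symm
    rw [Jmat_transpose, Matrix.neg_mul, h1, Matrix.mul_neg]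
  refine ⟨hRsymp, hRorth, fun l => ?_, fun hP l => ?_⟩
  · have hWWh : IsSymplectic (W l * Wh⁻¹) := (hW l).mul hWh.inv
    refine ⟨embed_symp (hW l), ?_, ?_⟩
    · rw [hRinv]; exact hRTsymp.mul (embed_symp (hW l))
    · rw [hRinv]; exact (hRTsymp.mul (embed_symp hWWh)).mul hRsymp
  · have hWdet : IsUnit (W l).det := (hW l).isUnit_det
    have hWhdet : IsUnit Wh.det := hWh.isUnit_det
    have hWWh : IsSymplectic (W l * Wh⁻¹) := (hW l).mul hWh.inv
    have hmid : Rmat k * (Rmat k)⁻¹ = 1 := mul_nonsing_inv _ hRdet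
    have hcore :
        ((fromBlocks 0 0 0 (Psi W W' l)).submatrix (swEquiv k) (swEquiv k)).PosSemidef :=
      (posSemidef_corner (hP l)).submatrix _
    have hPsiW : (Jmat k)ᵀ * W' l * (W l)⁻¹ = Psi W W' l := rfl
    constructor
    · have key : Psi (fun t => (Rmat k)⁻¹ * embed (W t))
          (fun t => (Rmat k)⁻¹ * embedDer (W' t)) l
          = (Rmat k)ᵀ * ((Jmat (k ⊕ k))ᵀ * embedDer (W' l) * (embed (W l))⁻¹) * Rmat k := by
        simp only [Psi]
        rw [Matrix.mul_inv_rev, nonsing_inv_nonsing_inv _ hRdet]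
        calc (Jmat (k⊕k))ᵀ * ((Rmat k)⁻¹ * embedDer (W' l)) * ((embed (W l))⁻¹ * Rmat k)
            = ((Jmat (k⊕k))ᵀ * (Rmat k)⁻¹) * embedDer (W' l) * (embed (W l))⁻¹ * Rmat k := by
              noncomm_ring
          _ = _ := by rw [hJR]; noncomm_ring
      rw [key, psi_core _ _ hWdet, hPsiW]
      exact posSemidef_congr hcore
    · have key : Psi (fun t => (Rmat k)⁻¹ * embed (W t * Wh⁻¹) * Rmat k)
          (fun t => (Rmat k)⁻¹ * embedDer (W' t * Wh⁻¹) * Rmat k) l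
          = (Rmat k)ᵀ * ((Jmat (k ⊕ k))ᵀ * embedDer (W' l * Wh⁻¹)
              * (embed (W l * Wh⁻¹))⁻¹) * Rmat k := by
        simp only [Psi]
        rw [Matrix.mul_inv_rev, Matrix.mul_inv_rev, nonsing_inv_nonsing_inv _ hRdet]
        calc (Jmat (k⊕k))ᵀ * ((Rmat k)⁻¹ * embedDer (W' l * Wh⁻¹) * Rmat k)
              * ((Rmat k)⁻¹ * ((embed (W l * Wh⁻¹))⁻¹ * Rmat k))
            = ((Jmat (k⊕k))ᵀ * (Rmat k)⁻¹) * embedDer (W' l * Wh⁻¹)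
              * (Rmat k * (Rmat k)⁻¹) * (embed (W l * Wh⁻¹))⁻¹ * Rmat k := by noncomm_ring
          _ = _ := by rw [hJR, hmid]; noncomm_ring
      have hsimp : (Jmat k)ᵀ * (W' l * Wh⁻¹) * (W l * Wh⁻¹)⁻¹ = Psi W W' l := by
        rw [Matrix.mul_inv_rev, nonsing_inv_nonsing_inv _ hWhdet, ← hPsiW]
        calc (Jmat k)ᵀ * (W' l * Wh⁻¹) * (Wh * (W l)⁻¹)
            = (Jmat k)ᵀ * W' l * (Wh⁻¹ * Wh) * (W l)⁻¹ := by noncomm_ring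
          _ = _ := by rw [nonsing_inv_mul _ hWhdet]; noncomm_ring
      rw [key, psi_core _ _ hWWh.isUnit_det, hsimp]
      exact posSemidef_congr hcore


/-- `R` is symplectic and orthogonal; `{I,W(λ)}`,
`𝒵(λ) = R⁻¹{I,W(λ)}` and `Ẑ(λ) = R⁻¹{I,W(λ)Ŵ⁻¹}R` are symplectic; and if
`Ψ(W(λ)) ≥ 0` for all `λ`, then `Ψ(𝒵(λ)) ≥ 0` and `Ψ(Ẑ(λ)) ≥ 0` for all `λ`. -/
theorem statement18 (n : ℕ) (W W' : ℝ → Matrix (Fin n ⊕ Fin n) (Fin n ⊕ Fin n) ℝ)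
    (Wh : Matrix (Fin n ⊕ Fin n) (Fin n ⊕ Fin n) ℝ)
    (hW : ∀ l, IsSymplectic (W l)) (hWh : IsSymplectic Wh)
    (hd : HasMatDeriv W W') :
    IsSymplectic (Rmat (Fin n)) ∧ (Rmat (Fin n))ᵀ * Rmat (Fin n) = 1 ∧
    (∀ l, IsSymplectic (embed (W l)) ∧
      IsSymplectic ((Rmat (Fin n))⁻¹ * embed (W l)) ∧
      IsSymplectic ((Rmat (Fin n))⁻¹ * embed (W l * Wh⁻¹) * Rmat (Fin n))) ∧
    ((∀ l, (Psi W W' l).PosSemidef) →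
      ∀ l,
        (Psi (fun t => (Rmat (Fin n))⁻¹ * embed (W t))
            (fun t => (Rmat (Fin n))⁻¹ * embedDer (W' t)) l).PosSemidef ∧
        (Psi (fun t => (Rmat (Fin n))⁻¹ * embed (W t * Wh⁻¹) * Rmat (Fin n))
            (fun t => (Rmat (Fin n))⁻¹ * embedDer (W' t * Wh⁻¹) * Rmat (Fin n)) l).PosSemidef) :=
  ⟨(statement18_aux W W' Wh hW hWh).1, (statement18_aux W W' Wh hW hWh).2.1,
   (statement18_aux W W' Wh hW hWh).2.2.1, (statement18_aux W W' Wh hW hWh).2.2.2⟩
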